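/- Let n : ℝ → ℂ \ {0} be a continuous 1-periodic function with winding number q + pm over one period (i.e., a continuous angle function ϑ with n(t) ∈ ℝ⁺e^{iϑ(t)} satisfies ϑ(t+1) = ϑ(t) + 2π(q+pm) for all t), where gcd(p,q) = 1, p ≥ 2, m ∈ ℤ. Suppose there exist k ∈ {1,…,p−1} and c > 0 such that n(t + k/p) = c·n(t) for all t ∈ ℝ. Then a contradiction arises; i.e., no such k, c exist. -/

import Mathlib

open Complex Real

/-- Let `n : ℝ → ℂ ∖ {0}` be a continuous 1-periodic map with winding number
`q + p·m` over one period (witnessed by a continuous angle lift `ϑ`), where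
`gcd(q,p) = 1` and `p ≥ 2`.  If there are `k ∈ {1,…,p−1}` and `c > 0` with
`n(t + k/p) = c·n(t)` for all `t`, then we reach a contradiction. -/
theorem no_scaled_shift_symmetry (p : ℕ) (q m : ℤ) (hp : 2 ≤ p)
    (hgcd : Int.gcd q (p : ℤ) = 1)
    (n : ℝ → ℂ) (hn : Continuous n) (hnz : ∀ t, n t ≠ 0)
    (hnper : ∀ t, n (t + 1) = n t)
    (ϑ : ℝ → ℝ) (hϑ : Continuous ϑ)
    (hangle : ∀ t, n t = (‖n t‖ : ℂ) * Complex.exp ((ϑ t : ℂ) * Complex.I))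
    (hϑper : ∀ t, ϑ (t + 1) = ϑ t + 2 * π * ((q : ℝ) + (p : ℝ) * (m : ℝ)))
    (k : ℕ) (hk1 : 1 ≤ k) (hk2 : k ≤ p - 1) (c : ℝ) (hc : 0 < c)
    (hsym : ∀ t : ℝ, n (t + (k : ℝ) / (p : ℝ)) = (c : ℂ) * n t) :
    False := by
  have hppos : (0:ℝ) < (p:ℝ) := by positivity
  have hπ : (0:ℝ) < π := Real.pi_pos
  -- Step 1: for each t, the angle difference is an integer multiple of 2π.
  have key : ∀ t : ℝ, ∃ l : ℤ, ϑ (t + (k:ℝ)/(p:ℝ)) = ϑ t + l * (2*π) := by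
    intro t
    have h1 := hsym t
    have habs : ‖n (t + (k:ℝ)/(p:ℝ))‖ = c * ‖n t‖ := by
      rw [h1, norm_mul]; simp [abs_of_pos hc]
    have hexp : Complex.exp ((ϑ (t + (k:ℝ)/(p:ℝ)) : ℂ) * Complex.I)
        = Complex.exp ((ϑ t : ℂ) * Complex.I) := by
      have e1 := hangle (t + (k:ℝ)/(p:ℝ))
      have e2 := hangle t
      rw [e1, e2, habs] at h1
      have hc0 : ((c : ℂ) * (‖n t‖ : ℂ)) ≠ 0 := by
        have : ‖n t‖ ≠ 0 := by
          simpa using (hnz t)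
        push_cast
        exact mul_ne_zero (by exact_mod_cast hc.ne') (by exact_mod_cast this)
      apply mul_left_cancel₀ hc0
      push_cast at h1 ⊢
      linear_combination h1
    rw [Complex.exp_eq_exp_iff_exists_int] at hexp
    obtain ⟨l, hl⟩ := hexp
    refine ⟨l, ?_⟩
    have := congrArg Complex.im hl
    simpa [Complex.mul_I_im, Complex.add_im, Complex.mul_im] using this
  -- Step 2: the integer is constant by continuity (intermediate value theorem).
  obtain ⟨l, hl0⟩ := key 0
  have hconst : ∀ t, ϑ (t + (k:ℝ)/(p:ℝ)) = ϑ t + l * (2*π) := by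
    intro t
    obtain ⟨l', hl'⟩ := key t
    suffices h : l' = l by rw [hl', h]
    by_contra hne
    set g : ℝ → ℝ := fun s => ϑ (s + (k:ℝ)/(p:ℝ)) - ϑ s with hg
    have hgc : Continuous g := (hϑ.comp (continuous_id.add continuous_const)).sub hϑ
    have hg0 : g 0 = l * (2*π) := by simp only [hg]; rw [hl0]; ring
    have hgt : g t = l' * (2*π) := by simp only [hg]; rw [hl']; ring
    set a : ℤ := min l l' with ha
    have hmin : (a:ℝ) * (2*π) + π ∈ Set.uIcc (g 0) (g t) := by
      rw [hg0, hgt]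
      have h1 : a ≤ l := min_le_left _ _
      have h2 : a ≤ l' := min_le_right _ _
      have h3 : a + 1 ≤ max l l' := by
        rcases min_cases l l' with ⟨h, hle⟩ | ⟨h, hlt⟩ <;> omega
      have hmax : l ≤ max l l' ∧ l' ≤ max l l' := ⟨le_max_left _ _, le_max_right _ _⟩
      rcases le_total l l' with h | h
      · have haL : (a:ℝ) = (l:ℝ) := by exact_mod_cast (by omega : a = l)
        rw [Set.mem_uIcc]
        left
        constructor
        · nlinarith [haL]
        · have : (a:ℝ) + 1 ≤ (l':ℝ) := by exact_mod_cast (by omega : a + 1 ≤ l')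
          nlinarith
      · have haL : (a:ℝ) = (l':ℝ) := by exact_mod_cast (by omega : a = l')
        rw [Set.mem_uIcc]
        right
        constructor
        · nlinarith [haL]
        · have : (a:ℝ) + 1 ≤ (l:ℝ) := by exact_mod_cast (by omega : a + 1 ≤ l)
          nlinarith
    have hsub := intermediate_value_uIcc (hgc.continuousOn (s := Set.uIcc 0 t))
    obtain ⟨s, _, hs⟩ := hsub hmin
    obtain ⟨ls, hls⟩ := key s
    have : (ls : ℝ) * (2*π) = (a:ℝ) * (2*π) + π := by
      have : g s = ls * (2*π) := by simp [hg, hls]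
      linarith [hs, this]
    have h2 : (2*ls : ℝ) = 2*a + 1 := by
      have hπ0 : π ≠ 0 := hπ.ne'
      field_simp at this
      nlinarith [this]
    have : (2*ls : ℤ) = 2*a + 1 := by exact_mod_cast h2
    omega
  -- Step 3: iterate the shift p times and periodicity k times.
  have hiter : ∀ j : ℕ, ϑ ((j:ℝ) * ((k:ℝ)/(p:ℝ))) = ϑ 0 + j * ((l:ℝ) * (2*π)) := by
    intro j
    induction j with
    | zero => simp
    | succ j ih =>
      have hc' : ((j+1:ℕ):ℝ) * ((k:ℝ)/(p:ℝ)) = (j:ℝ)*((k:ℝ)/(p:ℝ)) + (k:ℝ)/(p:ℝ) := by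
        push_cast; ring
      rw [hc', hconst, ih]; push_cast; ring
  have hper : ∀ j : ℕ, ϑ (j:ℝ) = ϑ 0 + j * (2 * π * ((q : ℝ) + (p : ℝ) * (m : ℝ))) := by
    intro j
    induction j with
    | zero => simp
    | succ j ih =>
      have hc' : ((j+1:ℕ):ℝ) = (j:ℝ) + 1 := by push_cast; ring
      rw [hc', hϑper, ih]; push_cast; ring
  have hpk : (p:ℝ) * ((k:ℝ)/(p:ℝ)) = (k:ℝ) := by field_simp
  have e1 := hiter p
  rw [hpk] at e1
  have e2 := hper k
  have heq : (p:ℝ) * ((l:ℝ) * (2*π)) = (k:ℝ) * (2 * π * ((q : ℝ) + (p : ℝ) * (m : ℝ))) := by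
    linarith [e1, e2]
  have heqℤ : (p:ℤ) * l = (k:ℤ) * (q + (p:ℤ) * m) := by
    have hπ0 : π ≠ 0 := hπ.ne'
    have : (((p:ℤ) * l : ℤ) : ℝ) = (((k:ℤ) * (q + (p:ℤ) * m) : ℤ) : ℝ) := by
      push_cast
      nlinarith [heq]
    exact_mod_cast this
  have hdvd : (p:ℤ) ∣ (k:ℤ) * q := by
    refine ⟨l - (k:ℤ) * m, ?_⟩
    linarith [heqℤ]
  have hcop : IsCoprime (p:ℤ) q := by
    rw [Int.isCoprime_iff_gcd_eq_one, Int.gcd_comm]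
    exact hgcd
  have hpk' : (p:ℤ) ∣ (k:ℤ) := hcop.dvd_of_dvd_mul_right hdvd
  have : p ∣ k := by exact_mod_cast hpk'
  have := Nat.le_of_dvd (by omega) this
  omega
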